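/- Let R be a *-ring and let a ∈ R be both group invertible and Moore–Penrose invertible. Then a is an SEP element if and only if a(a#)*a⁺ is a right (a⁺a²)-idempotent, i.e. (a(a#)*a⁺)² = a(a#)*a⁺ · a⁺a². -/
import Mathlib


theorem stmt_8 (R : Type*) [Ring R] [StarRing R] (a ap ag : R)
    (h1 : a * ap * a = a) (h2 : ap * a * ap = ap)
    (h3 : star (a * ap) = a * ap) (h4 : star (ap * a) = ap * a)
    (g1 : a * ag * a = a) (g2 : ag * a * ag = ag) (g3 : a * ag = ag * a) :
    (star a = ap ∧ ap = ag) ↔ (a * star ag * ap) * (a * star ag * ap) = (a * star ag * ap) * (ap * a * a) := by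
  constructor
  · rintro ⟨e1, e2⟩
    subst e2
    subst e1
    simp only [star_star]
    linear_combination (norm := noncomm_ring) a * a * star a * a * g3 + a * a * star a * g3 * a
  · intro hyp
    have h3x : star ap * star a = a * ap := by simpa [star_mul] using h3
    have h4x : star a * star ap = ap * a := by simpa [star_mul] using h4
    have s1 : star a * star ap * star a = star a := by
      simpa [star_mul, mul_assoc] using congrArg star h1
    have s2 : star ap * star a * star ap = star ap := by
      simpa [star_mul, mul_assoc] using congrArg star h2
    have t1 : star a * star ag * star a = star a := by
      simpa [star_mul, mul_assoc] using congrArg star g1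
    have t2 : star ag * star a * star ag = star ag := by
      simpa [star_mul, mul_assoc] using congrArg star g2
    have t3 : star ag * star a = star a * star ag := by
      simpa [star_mul] using congrArg star g3
    have shyp : star ap * ag * star a * star ap * ag * star a = star a * star a * star ap * star ap * ag * star a := by
      simpa [star_mul, star_star, mul_assoc] using congrArg star hyp
    have e0 : a * ap * a = a := by linear_combination (norm := noncomm_ring) h1
    have e1 : ap * a * ap = ap := by linear_combination (norm := noncomm_ring) h2
    have e2 : a * ap = star ap * star a := by linear_combination (norm := noncomm_ring) - h3x
    have e3 : ap * a = star a * star ap := by linear_combination (norm := noncomm_ring) - h4x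
    have e4 : a * ag * a = a := by linear_combination (norm := noncomm_ring) g1
    have e5 : ag * a * ag = ag := by linear_combination (norm := noncomm_ring) g2
    have e6 : ag * a = a * ag := by linear_combination (norm := noncomm_ring) - g3
    have e7 : star a * star ap * star a = star a := by linear_combination (norm := noncomm_ring) s1
    have e8 : star ap * star a * star ap = star ap := by linear_combination (norm := noncomm_ring) s2
    have e9 : star a * star ag * star a = star a := by linear_combination (norm := noncomm_ring) t1
    have e10 : star ag * star a * star ag = star ag := by linear_combination (norm := noncomm_ring) t2
    have e11 : star ag * star a = star a * star ag := by linear_combination (norm := noncomm_ring) t3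
    have e12 : a * star ag * ap * star a * star ap * a = a * star a * star ag * star ap * star ag * ap := by linear_combination (norm := noncomm_ring) - hyp - a * star ag * ap * e3 * a + a * star ag * e3 * star ag * ap + a * e11 * star ap * star ag * ap
    have e13 : star ap * ag * star a * star ap * ag * star a = star a * star a * star ap * star ap * ag * star a := by linear_combination (norm := noncomm_ring) shyp
    have e15 : ap * star ap * star a = ap := by linear_combination (norm := noncomm_ring) e1 - ap * e2
    have e16 : a * star a * star ap = a := by linear_combination (norm := noncomm_ring) e0 - a * e3
    have e17 : star a * star ap * ap = ap := by linear_combination (norm := noncomm_ring) e1 - e3 * ap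
    have e19 : star a * star ap * a * ag = star a * star ap := by linear_combination (norm := noncomm_ring) - e3 * ag * a + ap * e4 - star a * star ap * e6 + e3
    have e20 : a * ag * star a * star ap = a * ag := by linear_combination (norm := noncomm_ring) - e6 * ap * a + ag * e0 - a * ag * e3 + e6
    have e23 : a * ag * ag = ag := by linear_combination (norm := noncomm_ring) e5 - e6 * ag
    have e24 : star a * star ag * star ap * star a = star a * star ag := by linear_combination (norm := noncomm_ring) - e11 * star ap * star a + star ag * e7 + e11
    have e25 : star a * star a * star ag = star a := by linear_combination (norm := noncomm_ring) e9 - star a * e11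
    have e26 : star a * star ag * star ag = star ag := by linear_combination (norm := noncomm_ring) e10 - e11 * star ag
    have e27 : a * star a * star ag * star ap * star ag * ap * star a * star ap = a * star a * star ag * star ap * star ag * ap := by linear_combination (norm := noncomm_ring) - e12 * ap * a + a * star ag * ap * star a * star ap * e0 - a * star a * star ag * star ap * star ag * ap * e3 + e12
    have e28 : a * star ag * ap * star a * star ap * star ap * star a = a * star a * star ag * star ap * star ag * ap * ap := by linear_combination (norm := noncomm_ring) e12 * ap - a * star ag * ap * star a * star ap * e2
    have e29 : star a * star ap * star ag * ap * star a * star ap * a = star a * star ag * star ap * star ag * ap := by linear_combination (norm := noncomm_ring) - e3 * star ag * ap * star a * star ap * a + ap * e12 + e3 * star a * star ag * star ap * star ag * ap + e7 * star ag * star ap * star ag * ap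
    have e34 : ap * star a * star ag = ap := by linear_combination (norm := noncomm_ring) - e15 * star ag * star a + ap * star ap * e9 - ap * e11 + e15
    have e35 : a * star a * star a * star a * star ap * star ap * ag * star a = ag * star a := by linear_combination (norm := noncomm_ring) e16 * ag * star a * star ap * ag * star a - a * star a * e13 + e20 * ag * star a + e23 * star a
    have e36 : star a * star ag * ap = ap := by linear_combination (norm := noncomm_ring) e9 * star ap * ap - star a * star ag * e17 + e17
    have e37 : star a * star ag * star ap * ap = star ag * ap := by linear_combination (norm := noncomm_ring) - e11 * star ap * ap + star ag * e17
    have e42 : star a * star ap * ag * star a * star ap = star a * star ap * ag := by linear_combination (norm := noncomm_ring) - e3 * ag * star a * star ap + ap * e20 + e3 * ag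
    have e43 : ag * star a * star ap = ag := by linear_combination (norm := noncomm_ring) - e5 * star a * star ap + ag * e20 + e5
    have e47 : star a * star ap * ag * ag = ap * ag := by linear_combination (norm := noncomm_ring) - e3 * ag * ag + ap * e23
    have e48 : star ag * star ap * star a = star ag := by linear_combination (norm := noncomm_ring) - e10 * star ap * star a + star ag * e24 + e10
    have e49 : star a * star ap * star ag = star ag := by linear_combination (norm := noncomm_ring) e7 * star ag * star ag - star a * star ap * e26 + e26
    have e50 : star a * star a * star ap * star ap * ag * star ag = star ap * ag * ag * star ag := by linear_combination (norm := noncomm_ring) - e13 * star ag * star ag + star ap * ag * star a * star ap * ag * e26 - star a * star a * star ap * star ap * ag * e26 + star ap * e43 * ag * star ag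
    have e52 : star a * star ag * star ap * star ag = star ag * star ag := by linear_combination (norm := noncomm_ring) e24 * star ag * star ag - star a * star ag * star ap * e26 + e26 * star ag
    have e53 : star ag * star ag * ap * star a * star ap = star ag * star ag * ap := by linear_combination (norm := noncomm_ring) - e3 * star a * star ag * star ap * star ag * ap * star a * star ap + ap * e27 - e7 * star ag * star ap * star ag * ap * star a * star ap + e3 * star a * star ag * star ap * star ag * ap - e52 * ap * star a * star ap + e7 * star ag * star ap * star ag * ap + e52 * ap
    have e54 : star ag * ap * star a * star ap * star ap * star a = star ag * star ag * ap * ap := by linear_combination (norm := noncomm_ring) - e3 * star ag * ap * star a * star ap * star ap * star a + ap * e28 + e3 * star a * star ag * star ap * star ag * ap * ap - e49 * ap * star a * star ap * star ap * star a + e7 * star ag * star ap * star ag * ap * ap + e52 * ap * ap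
    have e56 : star ag * star ag * ap = star ag * star ap * ag := by linear_combination (norm := noncomm_ring) e29 * ag * a - star a * star ap * star ag * ap * star a * star ap * e4 + star a * star ag * star ap * star ag * ap * e6 + star a * star ag * star ap * star ag * e3 * ag + star a * star ag * star ap * e11 * star ap * ag + e24 * star ag * star ap * ag - e29 + e26 * star ap * ag - e52 * ap
    have e58 : star ag * star ap * star ag * ap = star ag * star ap := by linear_combination (norm := noncomm_ring) e11 * star ap * star ag * ap * star a * star ap * a - star ag * e29 + e52 * ap * star a * star ap * a + e53 * a - e10 * star ap * star ag * ap + star ag * star ag * e3 + star ag * e11 * star ap + e10 * star ap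
    have e60 : star ag * ap * star a * star ap = star ag * star ap * ag * ag := by linear_combination (norm := noncomm_ring) e29 * ag - star a * star ap * star ag * ap * e19 + e52 * ap * ag - e49 * ap * star a * star ap + e56 * ag
    have e70 : star a * star a * star a * star ap * star ap * ag * star a = ap * ag * star a := by linear_combination (norm := noncomm_ring) - e3 * star a * star a * star a * star ap * star ap * ag * star a + ap * e35 - e7 * star a * star a * star ap * star ap * ag * star a
    have e73 : star ag * star ap * ag = star ag * star ap * ap := by linear_combination (norm := noncomm_ring) e10 * star ap * ap - star ag * e37 - e56
    have e81 : star a * star a * star ap * star ap * ag = star ap * ag * ag := by linear_combination (norm := noncomm_ring) - e13 * star ap + star ap * ag * e42 - star a * star a * star ap * star ap * e43 + star ap * e43 * ag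
    have e89 : star ap * ag * ag = star ap * ap * ag := by linear_combination (norm := noncomm_ring) - e8 * ag * ag + star ap * e47
    have e100 : star ag * star ap * ap * ag * star ag = star a * star ap * star ap * ag * star ag := by linear_combination (norm := noncomm_ring) e11 * star a * star ap * star ap * ag * star ag - star ag * e50 + e9 * star ap * star ap * ag * star ag - e73 * ag * star ag
    have e107 : ap * star a * star ap = ap := by linear_combination (norm := noncomm_ring) - e25 * star ag * ap * star a * star ap + star a * star a * e53 - e36 * star a * star ap + e25 * star ag * ap + e36
    have e108 : star ag * star ap * ap * ag = star ag * ap := by linear_combination (norm := noncomm_ring) - e26 * ap * star a * star ap + star a * e53 - e60 - e73 * ag + e26 * ap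
    have e112 : ap * ap = star a * ap := by linear_combination (norm := noncomm_ring) e25 * ap * star a * star ap * star ap * star a - star a * star a * e54 + star a * e107 * star ap * star a - e25 * star ag * ap * ap + star a * e15 - e36 * ap
    have e113 : star a * star ap * ag = ap := by linear_combination (norm := noncomm_ring) e25 * star ag * ap - star a * star a * e56 - e25 * star ap * ag + e36
    have e117 : star ag * ap = star a * star ap := by linear_combination (norm := noncomm_ring) - e25 * star ap * star ag * ap + star a * star a * e58 - e49 * ap + e25 * star ap
    have e125 : ap * ag = star a * ap := by linear_combination (norm := noncomm_ring) e25 * ap * star a * star ap - star a * star a * e60 - e25 * star ap * ag * ag + star a * e107 - e47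
    have e146 : star a * star ap * star ap * ag * star a = star a := by linear_combination (norm := noncomm_ring) - e48 * star a * star a * star ap * star ap * ag * star a + star ag * star ap * e70 - e11 * star a * star ap * star ap * ag * star a - e9 * star ap * star ap * ag * star a + e108 * star a + e117 * star a + e7
    have e156 : star ap * star a * ap = ap := by linear_combination (norm := noncomm_ring) - e9 * star a * star ap * star ap * ag + star a * star ag * e81 + star a * e73 * ag + e37 * ag - e81 + e117 * ag - e89 - star ap * e125 + e113
    have e178 : star a * star ag = star a * star ap := by linear_combination (norm := noncomm_ring) - e100 * star a + star ag * star ap * ap * ag * e11 + e108 * star a * star ag - star a * star ap * star ap * ag * e11 - e146 * star ag + star ag * e34 + e117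
    have e189 : star a * star a * star ap = ap := by linear_combination (norm := noncomm_ring) - e112 * a + ap * e3 + e107 - star a * e3
    have e191 : a * ag = star ap * star a := by linear_combination (norm := noncomm_ring) - e16 * ag + a * e113 + e2
    have e192 : ag = ap := by linear_combination (norm := noncomm_ring) - e20 * ag + a * ag * e113 - e23 + e191 * ap + e156
    have e215 : ap = star a := by linear_combination (norm := noncomm_ring) e25 - star a * e178 - e189
    have eA : star a = ap := by linear_combination (norm := noncomm_ring) - e215
    have eB : ap = ag := by linear_combination (norm := noncomm_ring) - e192
    exact ⟨eA, eB⟩
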